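/- arXiv:2002.05050 — 5 statements merged into one kernel-verified Lean document; each statement's English description precedes it below -/
import Mathlib

section
/- Let L_t, C_t > 0, r1 > 0, V* > 0, I_t* = I_L(V*), and let I_t, V : ℝ → ℝ be differentiable functions with V(t) > 0 for all t, satisfying the closed-loop DGU dynamics with zero disturbance: L_t·İ_t = −r1·(I_t − I_t*) − (V − V*) and C_t·V̇ = (I_t − I_t*) − r2(V)·(V − V*), where r2(V) = Y_L − P_L/(V·V*). Define the shaped Hamiltonian H_c(t) = (L_t/2)·(I_t(t) − I_t*)² + (C_t/2)·(V(t) − V*)². Then for all t, dH_c/dt = −r1·(I_t(t) − I_t*)² − r2(V(t))·(V(t) − V*)²; moreover, if Y_L·V(t)·V* > P_L and (I_t(t), V(t)) ≠ (I_t*, V*), then dH_c/dt < 0 at t. -/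
/-- ZIP load current: I_L(V) = Y_L·V + Ī_L + P_L/V. -/
noncomputable def ZIPload (YL ILbar PL V : ℝ) : ℝ := YL * V + ILbar + PL / V

/-- along solutions of the undisturbed closed-loop DGU dynamics
the shaped Hamiltonian dissipates with rate
−r1·(I_t − I_t*)² − r2(V)·(V − V*)², and strictly whenever the state is off
the equilibrium and the load passivity condition holds. -/
theorem closed_loop_hamiltonian_dissipation
    (Lt Ct r1 Vs YL ILbar PL : ℝ)
    (hLt : 0 < Lt) (hCt : 0 < Ct) (hr1 : 0 < r1) (hVs : 0 < Vs)
    (hYL : 0 < YL) (hIL : 0 < ILbar) (hPL : 0 < PL)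
    (Its : ℝ) (hIts : Its = ZIPload YL ILbar PL Vs)
    (It V : ℝ → ℝ)
    (hItd : Differentiable ℝ It) (hVd : Differentiable ℝ V)
    (hVpos : ∀ t, 0 < V t)
    (hdyn1 : ∀ t, Lt * deriv It t = -r1 * (It t - Its) - (V t - Vs))
    (hdyn2 : ∀ t, Ct * deriv V t =
      (It t - Its) - (YL - PL / (V t * Vs)) * (V t - Vs)) :
    (∀ t, deriv (fun τ => Lt / 2 * (It τ - Its) ^ 2 + Ct / 2 * (V τ - Vs) ^ 2) t
        = -r1 * (It t - Its) ^ 2 - (YL - PL / (V t * Vs)) * (V t - Vs) ^ 2) ∧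
    (∀ t, YL * V t * Vs > PL → (It t, V t) ≠ (Its, Vs) →
      deriv (fun τ => Lt / 2 * (It τ - Its) ^ 2 + Ct / 2 * (V τ - Vs) ^ 2) t < 0) := by
  have key : ∀ t, deriv (fun τ => Lt / 2 * (It τ - Its) ^ 2 + Ct / 2 * (V τ - Vs) ^ 2) t
      = -r1 * (It t - Its) ^ 2 - (YL - PL / (V t * Vs)) * (V t - Vs) ^ 2 := by
    intro t
    have hI := (hItd t).hasDerivAt
    have hV := (hVd t).hasDerivAt
    have h1 : HasDerivAt (fun τ => Lt / 2 * (It τ - Its) ^ 2)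
        (Lt / 2 * (2 * (It t - Its) * deriv It t)) t := by
      exact (((hI.sub_const Its).pow 2).const_mul (Lt / 2)).congr_deriv (by ring)
    have h2 : HasDerivAt (fun τ => Ct / 2 * (V τ - Vs) ^ 2)
        (Ct / 2 * (2 * (V t - Vs) * deriv V t)) t := by
      exact (((hV.sub_const Vs).pow 2).const_mul (Ct / 2)).congr_deriv (by ring)
    have : deriv (fun τ => Lt / 2 * (It τ - Its) ^ 2 + Ct / 2 * (V τ - Vs) ^ 2) t = _ := (h1.add h2).deriv
    rw [this]
    have e1 : Lt / 2 * (2 * (It t - Its) * deriv It t)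
        = (It t - Its) * (Lt * deriv It t) := by ring
    have e2 : Ct / 2 * (2 * (V t - Vs) * deriv V t)
        = (V t - Vs) * (Ct * deriv V t) := by ring
    rw [e1, e2, hdyn1 t, hdyn2 t]; ring
  refine ⟨key, fun t hpass hne => ?_⟩
  rw [key t]
  have hr2 : 0 < YL - PL / (V t * Vs) := by
    have hVV : 0 < V t * Vs := mul_pos (hVpos t) hVs
    rw [sub_pos, div_lt_iff₀ hVV]
    linarith [hpass]
  have h1 : 0 ≤ r1 * (It t - Its) ^ 2 := by positivity
  have h2 : 0 ≤ (YL - PL / (V t * Vs)) * (V t - Vs) ^ 2 := by positivity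
  rcases eq_or_ne (It t) Its with hI | hI
  · have hVne : V t ≠ Vs := fun h => hne (by rw [hI, h])
    have : 0 < (YL - PL / (V t * Vs)) * (V t - Vs) ^ 2 :=
      mul_pos hr2 (pow_two_pos_of_ne_zero (sub_ne_zero.mpr hVne))
    nlinarith
  · have : 0 < r1 * (It t - Its) ^ 2 := mul_pos hr1 (pow_two_pos_of_ne_zero (sub_ne_zero.mpr hI))
    nlinarith
end

section
/- Let L_t, C_t > 0, r1 > 0, k_I > 0, V* > 0, I_t* = I_L(V*), and let I_N ∈ ℝ be a constant disturbance. Consider the extended closed-loop DGU dynamics with integral action, with state (I_t, V, z_e) ∈ ℝ × (0,∞) × ℝ: L_t·İ_t = −r1·(I_t − I_t*) − (V − V*) − r1·z_e − k_I·L_t·(V − V*), C_t·V̇ = (I_t − I_t*) − r2(V)·(V − V*) − I_N, ż_e = k_I·(V − V*), where r2(V) = Y_L − P_L/(V·V*). Then (I_t, V, z_e) = (I_L(V*) + I_N, V*, −I_N) is an equilibrium of this system, and it is the unique equilibrium; in particular the steady-state voltage error is zero despite the disturbance. -/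
/-- with integral action, (I_L(V*) + I_N, V*, −I_N) is the unique
equilibrium of the extended closed-loop DGU dynamics; in particular the
steady-state voltage error is zero despite the disturbance. -/
theorem ia_equilibrium_unique
    (Lt Ct r1 kI Vs YL ILbar PL : ℝ)
    (hLt : 0 < Lt) (hCt : 0 < Ct) (hr1 : 0 < r1) (hkI : 0 < kI) (hVs : 0 < Vs)
    (hYL : 0 < YL) (hIL : 0 < ILbar) (hPL : 0 < PL)
    (Its : ℝ) (hIts : Its = ZIPload YL ILbar PL Vs)
    (IN : ℝ) :
    (-r1 * (ZIPload YL ILbar PL Vs + IN - Its) - (Vs - Vs)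
        - r1 * (-IN) - kI * Lt * (Vs - Vs) = 0 ∧
      (ZIPload YL ILbar PL Vs + IN - Its)
        - (YL - PL / (Vs * Vs)) * (Vs - Vs) - IN = 0 ∧
      kI * (Vs - Vs) = 0) ∧
    (∀ It V ze : ℝ, 0 < V →
      -r1 * (It - Its) - (V - Vs) - r1 * ze - kI * Lt * (V - Vs) = 0 →
      (It - Its) - (YL - PL / (V * Vs)) * (V - Vs) - IN = 0 →
      kI * (V - Vs) = 0 →
      It = ZIPload YL ILbar PL Vs + IN ∧ V = Vs ∧ ze = -IN) := by
  subst hIts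
  constructor
  · refine ⟨by ring, by ring, by ring⟩
  · intro It V ze hV h1 h2 h3
    have hVeq : V = Vs := by
      have := mul_eq_zero.mp h3
      rcases this with h | h
      · exact absurd h (ne_of_gt hkI)
      · linarith
    subst hVeq
    have hIt : It = ZIPload YL ILbar PL V + IN := by
      ring_nf at h2 ⊢; linarith
    refine ⟨hIt, rfl, ?_⟩
    rw [hIt] at h1
    have : -r1 * IN - r1 * ze = 0 := by linarith [h1]
    have hr1' : r1 ≠ 0 := ne_of_gt hr1
    field_simp at this
    nlinarith [this]
end

section
/- Let L_t, C_t > 0, r1 ≥ 0, k_I > 0, V* > 0, I_t* = I_L(V*), I_N ∈ ℝ constant, and let (I_t, V, z_e) : ℝ → ℝ × (0,∞) × ℝ be a differentiable solution of the extended closed-loop DGU dynamics with integral action: L_t·İ_t = −r1·(I_t − I_t*) − (V − V*) − r1·z_e − k_I·L_t·(V − V*), C_t·V̇ = (I_t − I_t*) − r2(V)·(V − V*) − I_N, ż_e = k_I·(V − V*), with r2(V) = Y_L − P_L/(V·V*). Define the shifted Hamiltonian H̃(t) = (L_t/2)·(I_t − I_t* + z_e)² + (C_t/2)·(V − V*)²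 + (1/(2·k_I))·(z_e + I_N)². Then along the solution, dH̃/dt = −r1·(I_t(t) − I_t* + z_e(t))² − r2(V(t))·(V(t) − V*)²; in particular dH̃/dt ≤ 0 whenever r1 ≥ 0 and Y_L·V(t)·V* ≥ P_L, so the integral action preserves the dissipativity assigned by the IDA-PBC controller. -/
/-- integral action preserves the dissipativity assigned by
IDA-PBC: along solutions of the extended closed loop, the shifted Hamiltonian
H̃ satisfies dH̃/dt = −r1·(I_t − I_t* + z_e)² − r2(V)·(V − V*)² ≤ 0 whenever
r1 ≥ 0 and Y_L·V·V* ≥ P_L. -/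
theorem ia_hamiltonian_dissipation
    (Lt Ct r1 kI Vs YL ILbar PL : ℝ)
    (hLt : 0 < Lt) (hCt : 0 < Ct) (hr1 : 0 ≤ r1) (hkI : 0 < kI) (hVs : 0 < Vs)
    (hYL : 0 < YL) (hIL : 0 < ILbar) (hPL : 0 < PL)
    (Its : ℝ) (hIts : Its = ZIPload YL ILbar PL Vs)
    (IN : ℝ)
    (It V ze : ℝ → ℝ)
    (hItd : Differentiable ℝ It) (hVd : Differentiable ℝ V)
    (hzed : Differentiable ℝ ze)
    (hVpos : ∀ t, 0 < V t)
    (hdyn1 : ∀ t, Lt * deriv It t = -r1 * (It t - Its) - (V t - Vs)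
        - r1 * ze t - kI * Lt * (V t - Vs))
    (hdyn2 : ∀ t, Ct * deriv V t =
        (It t - Its) - (YL - PL / (V t * Vs)) * (V t - Vs) - IN)
    (hdyn3 : ∀ t, deriv ze t = kI * (V t - Vs)) :
    (∀ t, deriv (fun τ => Lt / 2 * (It τ - Its + ze τ) ^ 2
          + Ct / 2 * (V τ - Vs) ^ 2 + 1 / (2 * kI) * (ze τ + IN) ^ 2) t
        = -r1 * (It t - Its + ze t) ^ 2
          - (YL - PL / (V t * Vs)) * (V t - Vs) ^ 2) ∧
    (∀ t, YL * V t * Vs ≥ PL →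
      deriv (fun τ => Lt / 2 * (It τ - Its + ze τ) ^ 2
          + Ct / 2 * (V τ - Vs) ^ 2 + 1 / (2 * kI) * (ze τ + IN) ^ 2) t ≤ 0) := by
  have key : ∀ t, deriv (fun τ => Lt / 2 * (It τ - Its + ze τ) ^ 2
          + Ct / 2 * (V τ - Vs) ^ 2 + 1 / (2 * kI) * (ze τ + IN) ^ 2) t
        = -r1 * (It t - Its + ze t) ^ 2
          - (YL - PL / (V t * Vs)) * (V t - Vs) ^ 2 := by
    intro t
    have h1 : HasDerivAt It (deriv It t) t := (hItd t).hasDerivAt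
    have h2 : HasDerivAt V (deriv V t) t := (hVd t).hasDerivAt
    have h3 : HasDerivAt ze (deriv ze t) t := (hzed t).hasDerivAt
    have H : HasDerivAt (fun τ => Lt / 2 * (It τ - Its + ze τ) ^ 2
          + Ct / 2 * (V τ - Vs) ^ 2 + 1 / (2 * kI) * (ze τ + IN) ^ 2)
        (Lt / 2 * (2 * (It t - Its + ze t) * (deriv It t + deriv ze t))
          + Ct / 2 * (2 * (V t - Vs) * deriv V t)
          + 1 / (2 * kI) * (2 * (ze t + IN) * deriv ze t)) t := by
      have hA : HasDerivAt (fun τ => (It τ - Its + ze τ) ^ 2)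
          (2 * (It t - Its + ze t) * (deriv It t + deriv ze t)) t := by
        have := (((h1.sub_const Its).add h3).pow 2)
        exact this.congr_deriv (by simp only [Pi.add_apply]; ring)
      have hB : HasDerivAt (fun τ => (V τ - Vs) ^ 2)
          (2 * (V t - Vs) * deriv V t) t := by
        have := ((h2.sub_const Vs).pow 2)
        exact this.congr_deriv (by ring)
      have hC : HasDerivAt (fun τ => (ze τ + IN) ^ 2)
          (2 * (ze t + IN) * deriv ze t) t := by
        have := ((h3.add_const IN).pow 2)
        exact this.congr_deriv (by ring)
      exact ((hA.const_mul (Lt / 2)).add (hB.const_mul (Ct / 2))).add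
        (hC.const_mul (1 / (2 * kI)))
    rw [H.deriv]
    have e1 := hdyn1 t
    have e2 := hdyn2 t
    have e3 := hdyn3 t
    have hk : kI ≠ 0 := ne_of_gt hkI
    have hLd : deriv It t = (-r1 * (It t - Its) - (V t - Vs)
        - r1 * ze t - kI * Lt * (V t - Vs)) / Lt := by
      field_simp; linarith [e1]
    have hVdv : deriv V t = ((It t - Its) - (YL - PL / (V t * Vs)) * (V t - Vs) - IN) / Ct := by
      rw [eq_div_iff (ne_of_gt hCt)]; linarith [e2]
    rw [hLd, hVdv, e3]
    field_simp
    ring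
  refine ⟨key, fun t ht => ?_⟩
  rw [key t]
  have hVt := hVpos t
  have hr2 : 0 ≤ YL - PL / (V t * Vs) := by
    rw [sub_nonneg, div_le_iff₀ (by positivity)]
    nlinarith
  nlinarith [sq_nonneg (It t - Its + ze t), sq_nonneg (V t - Vs),
    mul_nonneg hr1 (sq_nonneg (It t - Its + ze t)),
    mul_nonneg hr2 (sq_nonneg (V t - Vs))]
end

section
/- Let L_t, C_t > 0, r1 ≥ 0, k_I > 0, V* > 0, I_t* = I_L(V*), I_N ∈ ℝ constant, and let (I_t, V, z_e) : ℝ → ℝ × (0,∞) × ℝ be a differentiable solution of the extended closed-loop DGU dynamics with integral action: L_t·İ_t = −r1·(I_t − I_t*) − (V − V*) − r1·z_e − k_I·L_t·(V − V*), C_t·V̇ = (I_t − I_t*) − r2(V)·(V − V*) − I_N, ż_e = k_I·(V − V*), with r2(V) = Y_L − P_L/(V·V*). Define the transformed coordinates ζ(t) = L_t·(I_t(t) − I_t* + z_e(t)) and z_h(t) = C_t·V(t), and set z_h* = C_t·V*. Then the transformed state satisfies the port-Hamiltonian-form equations ζ̇ = −(r1/L_t)·ζ − (z_h − z_h*)/C_t,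 ż_h = ζ/L_t − r2(V)·(z_h − z_h*)/C_t − (z_e + I_N), ż_e = (k_I/C_t)·(z_h − z_h*); i.e., the state transformation brings the integral-action closed loop into port-Hamiltonian form with skew-symmetric interconnection entries ±1, ±k_I and damping r1, r2(V). -/
/-- the state transformation ζ = L_t·(I_t − I_t* + z_e),
z_h = C_t·V brings the integral-action closed loop into port-Hamiltonian
form with skew-symmetric interconnection ±1, ±k_I and damping r1, r2(V). -/
theorem ia_state_transformation_phs_form
    (Lt Ct r1 kI Vs YL ILbar PL : ℝ)
    (hLt : 0 < Lt) (hCt : 0 < Ct) (hr1 : 0 ≤ r1) (hkI : 0 < kI) (hVs : 0 < Vs)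
    (hYL : 0 < YL) (hIL : 0 < ILbar) (hPL : 0 < PL)
    (Its : ℝ) (hIts : Its = ZIPload YL ILbar PL Vs)
    (IN : ℝ)
    (It V ze : ℝ → ℝ)
    (hItd : Differentiable ℝ It) (hVd : Differentiable ℝ V)
    (hzed : Differentiable ℝ ze)
    (hVpos : ∀ t, 0 < V t)
    (hdyn1 : ∀ t, Lt * deriv It t = -r1 * (It t - Its) - (V t - Vs)
        - r1 * ze t - kI * Lt * (V t - Vs))
    (hdyn2 : ∀ t, Ct * deriv V t =
        (It t - Its) - (YL - PL / (V t * Vs)) * (V t - Vs) - IN)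
    (hdyn3 : ∀ t, deriv ze t = kI * (V t - Vs)) :
    ∀ t,
      deriv (fun τ => Lt * (It τ - Its + ze τ)) t
          = -(r1 / Lt) * (Lt * (It t - Its + ze t))
            - (Ct * V t - Ct * Vs) / Ct ∧
      deriv (fun τ => Ct * V τ) t
          = (Lt * (It t - Its + ze t)) / Lt
            - (YL - PL / (V t * Vs)) * ((Ct * V t - Ct * Vs) / Ct)
            - (ze t + IN) ∧
      deriv ze t = (kI / Ct) * (Ct * V t - Ct * Vs) := by
  intro t
  have h1 : deriv (fun τ => Lt * (It τ - Its + ze τ)) t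
      = Lt * (deriv It t + deriv ze t) := by
    have : deriv (fun τ => Lt * (It τ - Its + ze τ)) t
        = Lt * deriv (fun τ => It τ - Its + ze τ) t := by
      rw [deriv_const_mul]
      exact ((hItd t).sub_const _).add (hzed t)
    rw [this]
    have : deriv (fun τ => It τ - Its + ze τ) t
        = deriv (fun τ => It τ - Its) t + deriv ze t :=
      deriv_add ((hItd t).sub_const _) (hzed t)
    rw [this, deriv_sub_const]
  have h2 : deriv (fun τ => Ct * V τ) t = Ct * deriv V t := by
    rw [deriv_const_mul _ (hVd t)]
  have e1 := hdyn1 t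
  have e2 := hdyn2 t
  have e3 := hdyn3 t
  refine ⟨?_, ?_, ?_⟩
  · rw [h1, e3, mul_add, e1]
    field_simp
    ring
  · rw [h2, e2]
    field_simp
    ring
  · rw [e3]
    field_simp
end

section
/- Consider a DC microgrid of N DGU nodes and M RL lines with end-node maps a, b : Fin M → Fin N. For each node i let L_t(i), C_t(i) > 0, r1(i) > 0, V*(i) > 0, Y_L(i), Ī_L(i), P_L(i) > 0, I_t*(i) = I_L,i(V*(i)), and for each line e let L(e), R(e) > 0. Suppose the reference values are network-consistent: for each line e, R(e)·I*(e) = V*(a(e)) − V*(b(e)), and for each node i, Σ_{e : a(e)=i} I*(e) − Σ_{e : b(e)=i} I*(e) = 0. Let differentiable functions I_t(i,·), V(i,·) with V(i,t) > 0, and I(e,·) satisfy the interconnected closed-loop dynamics: L_t(i)·İ_t(i) = −r1(i)·(I_t(i) − I_t*(i)) − (V(i) − V*(i)), C_t(i)·V̇(i) = (I_t(i) − I_t*(i)) − r2_i(V(i))·(V(i) − V*(i)) − I_N(i), with I_N(i) = Σ_{e : a(e)=i} I(e) − Σ_{e : b(e)=i} I(e) and r2_i(V) = Y_L(i) − P_L(i)/(V·V*(i)),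 and L(e)·İ(e) = −R(e)·I(e) + V(a(e)) − V(b(e)). Define the microgrid Hamiltonian H_MG(t) = Σ_i [(L_t(i)/2)·(I_t(i) − I_t*(i))² + (C_t(i)/2)·(V(i) − V*(i))²] + Σ_e (L(e)/2)·(I(e) − I*(e))². Then dH_MG/dt = −Σ_i [r1(i)·(I_t(i) − I_t*(i))² + r2_i(V(i))·(V(i) − V*(i))²] − Σ_e R(e)·(I(e) − I*(e))²; moreover, if additionally Y_L(i)·V(i,t)·V*(i) > P_L(i) for all i, then dH_MG/dt ≤ 0 with equality at time t only if I_t(i,t) = I_t*(i), V(i,t) = V*(i) for all i and I(e,t) = I*(e) for all e. -/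
open Finset

lemma fib_sum {M N : ℕ} (g : Fin M → Fin N) (w : Fin N → ℝ) (f : Fin M → ℝ) :
    ∑ i, w i * ∑ e ∈ univ.filter (fun e => g e = i), f e = ∑ e, w (g e) * f e := by
  rw [← Finset.sum_fiberwise univ g (fun e => w (g e) * f e)]
  refine Finset.sum_congr rfl fun i _ => ?_
  rw [Finset.mul_sum]
  refine Finset.sum_congr rfl fun e he => ?_
  simp only [Finset.mem_filter] at he
  rw [he.2]

/-- the microgrid Hamiltonian of the interconnected closed-loop
DC microgrid dissipates with rate
−Σᵢ [r1(i)·(I_t(i)−I_t*(i))² + r2ᵢ(V(i))·(V(i)−V*(i))²] − Σₑ R(e)·(I(e)−I*(e))²,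
which is ≤ 0 in the strictly passive load region, with equality only at the
desired operating point. -/

theorem microgrid_hamiltonian_dissipation
    (N M : ℕ) (a b : Fin M → Fin N)
    (Lt Ct r1 Vs YL ILbar PL : Fin N → ℝ)
    (hLt : ∀ i, 0 < Lt i) (hCt : ∀ i, 0 < Ct i) (hr1 : ∀ i, 0 < r1 i)
    (hVs : ∀ i, 0 < Vs i) (hYL : ∀ i, 0 < YL i) (hIL : ∀ i, 0 < ILbar i)
    (hPL : ∀ i, 0 < PL i)
    (Its : Fin N → ℝ) (hIts : ∀ i, Its i = ZIPload (YL i) (ILbar i) (PL i) (Vs i))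
    (L R : Fin M → ℝ) (hL : ∀ e, 0 < L e) (hR : ∀ e, 0 < R e)
    (Is : Fin M → ℝ)
    (hlineref : ∀ e, R e * Is e = Vs (a e) - Vs (b e))
    (hnoderef : ∀ i, (∑ e ∈ univ.filter (fun e => a e = i), Is e)
        - (∑ e ∈ univ.filter (fun e => b e = i), Is e) = 0)
    (It V : Fin N → ℝ → ℝ) (I : Fin M → ℝ → ℝ)
    (hItd : ∀ i, Differentiable ℝ (It i)) (hVd : ∀ i, Differentiable ℝ (V i))
    (hId : ∀ e, Differentiable ℝ (I e))
    (hVpos : ∀ i t, 0 < V i t)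
    (hdyn1 : ∀ i t, Lt i * deriv (It i) t
        = -r1 i * (It i t - Its i) - (V i t - Vs i))
    (hdyn2 : ∀ i t, Ct i * deriv (V i) t
        = (It i t - Its i)
          - (YL i - PL i / (V i t * Vs i)) * (V i t - Vs i)
          - ((∑ e ∈ univ.filter (fun e => a e = i), I e t)
              - ∑ e ∈ univ.filter (fun e => b e = i), I e t))
    (hdyn3 : ∀ e t, L e * deriv (I e) t
        = -R e * I e t + V (a e) t - V (b e) t) :
    ∀ t,
      deriv (fun τ =>
          (∑ i, (Lt i / 2 * (It i τ - Its i) ^ 2 + Ct i / 2 * (V i τ - Vs i) ^ 2))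
            + ∑ e, L e / 2 * (I e τ - Is e) ^ 2) t
        = -(∑ i, (r1 i * (It i t - Its i) ^ 2
              + (YL i - PL i / (V i t * Vs i)) * (V i t - Vs i) ^ 2))
          - ∑ e, R e * (I e t - Is e) ^ 2 ∧
      ((∀ i, YL i * V i t * Vs i > PL i) →
        deriv (fun τ =>
            (∑ i, (Lt i / 2 * (It i τ - Its i) ^ 2 + Ct i / 2 * (V i τ - Vs i) ^ 2))
              + ∑ e, L e / 2 * (I e τ - Is e) ^ 2) t ≤ 0 ∧
        (deriv (fun τ =>
            (∑ i, (Lt i / 2 * (It i τ - Its i) ^ 2 + Ct i / 2 * (V i τ - Vs i) ^ 2))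
              + ∑ e, L e / 2 * (I e τ - Is e) ^ 2) t = 0 →
          (∀ i, It i t = Its i ∧ V i t = Vs i) ∧ ∀ e, I e t = Is e)) := by
  
  intro t
  -- derivative of the Hamiltonian
  have hH : HasDerivAt (fun τ =>
      (∑ i, (Lt i / 2 * (It i τ - Its i) ^ 2 + Ct i / 2 * (V i τ - Vs i) ^ 2))
        + ∑ e, L e / 2 * (I e τ - Is e) ^ 2)
      ((∑ i, ((It i t - Its i) * (Lt i * deriv (It i) t)
            + (V i t - Vs i) * (Ct i * deriv (V i) t)))
        + ∑ e, (I e t - Is e) * (L e * deriv (I e) t)) t := by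
    apply HasDerivAt.add
    · apply HasDerivAt.fun_sum
      intro i _
      have h1 := ((((hItd i t).hasDerivAt).sub_const (Its i)).fun_pow 2).const_mul (Lt i / 2)
      have h2 := ((((hVd i t).hasDerivAt).sub_const (Vs i)).fun_pow 2).const_mul (Ct i / 2)
      convert h1.fun_add h2 using 1
      ring
    · apply HasDerivAt.fun_sum
      intro e _
      have h3 := ((((hId e t).hasDerivAt).sub_const (Is e)).fun_pow 2).const_mul (L e / 2)
      refine h3.congr_deriv ?_
      ring
  have hderiv : deriv (fun τ =>
      (∑ i, (Lt i / 2 * (It i τ - Its i) ^ 2 + Ct i / 2 * (V i τ - Vs i) ^ 2))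
        + ∑ e, L e / 2 * (I e τ - Is e) ^ 2) t
      = -(∑ i, (r1 i * (It i t - Its i) ^ 2
            + (YL i - PL i / (V i t * Vs i)) * (V i t - Vs i) ^ 2))
        - ∑ e, R e * (I e t - Is e) ^ 2 := by
    rw [hH.deriv]
    simp only [hdyn1, hdyn2, hdyn3]
    -- line sum rewrite using hlineref
    have hline : ∀ e, (I e t - Is e) * (-R e * I e t + V (a e) t - V (b e) t)
        = -(R e * (I e t - Is e) ^ 2)
          + ((I e t - Is e) * ((V (a e) t - Vs (a e)) - (V (b e) t - Vs (b e)))) := by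
      intro e
      linear_combination (-(I e t - Is e)) * hlineref e
    rw [Finset.sum_congr rfl (fun e _ => hline e), Finset.sum_add_distrib]
    -- cross-term cancellation
    have hc1 : ∑ e, (I e t - Is e) * ((V (a e) t - Vs (a e)) - (V (b e) t - Vs (b e)))
        = ∑ i, (V i t - Vs i) * ((∑ e ∈ univ.filter (fun e => a e = i), I e t)
            - ∑ e ∈ univ.filter (fun e => b e = i), I e t) := by
      have ea := fib_sum a (fun i => V i t - Vs i) (fun e => I e t - Is e)
      have eb := fib_sum b (fun i => V i t - Vs i) (fun e => I e t - Is e)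
      have hIs : ∀ i : Fin N, (∑ e ∈ univ.filter (fun e => a e = i), (I e t - Is e))
          - ∑ e ∈ univ.filter (fun e => b e = i), (I e t - Is e)
          = (∑ e ∈ univ.filter (fun e => a e = i), I e t)
            - ∑ e ∈ univ.filter (fun e => b e = i), I e t := by
        intro i
        have := hnoderef i
        rw [Finset.sum_sub_distrib, Finset.sum_sub_distrib]
        linarith
      calc ∑ e, (I e t - Is e) * ((V (a e) t - Vs (a e)) - (V (b e) t - Vs (b e)))
          = (∑ e, (V (a e) t - Vs (a e)) * (I e t - Is e))
            - ∑ e, (V (b e) t - Vs (b e)) * (I e t - Is e) := by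
            rw [← Finset.sum_sub_distrib]; exact Finset.sum_congr rfl fun e _ => by ring
        _ = (∑ i, (V i t - Vs i) * ∑ e ∈ univ.filter (fun e => a e = i), (I e t - Is e))
            - ∑ i, (V i t - Vs i) * ∑ e ∈ univ.filter (fun e => b e = i), (I e t - Is e) := by
            rw [ea, eb]
        _ = ∑ i, (V i t - Vs i) * ((∑ e ∈ univ.filter (fun e => a e = i), (I e t - Is e))
            - ∑ e ∈ univ.filter (fun e => b e = i), (I e t - Is e)) := by
            rw [← Finset.sum_sub_distrib]; exact Finset.sum_congr rfl fun i _ => by ring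
        _ = _ := Finset.sum_congr rfl fun i _ => by rw [hIs i]
    rw [Finset.sum_add_distrib, hc1, Finset.sum_neg_distrib]
    have hz : (∑ x, (It x t - Its x) * (-r1 x * (It x t - Its x) - (V x t - Vs x)))
        + (∑ x, (V x t - Vs x) * ((It x t - Its x)
            - (YL x - PL x / (V x t * Vs x)) * (V x t - Vs x)
            - ((∑ e ∈ univ.filter (fun e => a e = x), I e t)
                - ∑ e ∈ univ.filter (fun e => b e = x), I e t)))
        + (∑ i, (V i t - Vs i) * ((∑ e ∈ univ.filter (fun e => a e = i), I e t)
                - ∑ e ∈ univ.filter (fun e => b e = i), I e t))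
        + (∑ i, (r1 i * (It i t - Its i) ^ 2
              + (YL i - PL i / (V i t * Vs i)) * (V i t - Vs i) ^ 2)) = 0 := by
      rw [← Finset.sum_add_distrib, ← Finset.sum_add_distrib, ← Finset.sum_add_distrib]
      exact Finset.sum_eq_zero fun i _ => by ring
    linarith [hz]
  refine ⟨hderiv, fun hpass => ?_⟩
  have hr2 : ∀ i, 0 < YL i - PL i / (V i t * Vs i) := by
    intro i
    have hv : 0 < V i t * Vs i := mul_pos (hVpos i t) (hVs i)
    rw [sub_pos, div_lt_iff₀ hv]
    have := hpass i
    nlinarith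
  have hterm1 : ∀ i : Fin N, (0:ℝ) ≤ r1 i * (It i t - Its i) ^ 2
      + (YL i - PL i / (V i t * Vs i)) * (V i t - Vs i) ^ 2 := fun i => by
    have := hr1 i; have := hr2 i; positivity
  have hterm2 : ∀ e : Fin M, (0:ℝ) ≤ R e * (I e t - Is e) ^ 2 := fun e => by
    have := hR e; positivity
  have hS1 : (0:ℝ) ≤ ∑ i, (r1 i * (It i t - Its i) ^ 2
      + (YL i - PL i / (V i t * Vs i)) * (V i t - Vs i) ^ 2) :=
    Finset.sum_nonneg fun i _ => hterm1 i
  have hS2 : (0:ℝ) ≤ ∑ e, R e * (I e t - Is e) ^ 2 :=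
    Finset.sum_nonneg fun e _ => hterm2 e
  constructor
  · rw [hderiv]; linarith
  · intro h0
    rw [hderiv] at h0
    have hS1z : ∑ i, (r1 i * (It i t - Its i) ^ 2
        + (YL i - PL i / (V i t * Vs i)) * (V i t - Vs i) ^ 2) = 0 := by linarith
    have hS2z : ∑ e, R e * (I e t - Is e) ^ 2 = 0 := by linarith
    have h1 := (Finset.sum_eq_zero_iff_of_nonneg (fun i _ => hterm1 i)).mp hS1z
    have h2 := (Finset.sum_eq_zero_iff_of_nonneg (fun e _ => hterm2 e)).mp hS2z
    constructor
    · intro i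
      have hi := h1 i (Finset.mem_univ i)
      have ha : (0:ℝ) ≤ r1 i * (It i t - Its i) ^ 2 := by have := hr1 i; positivity
      have hb : (0:ℝ) ≤ (YL i - PL i / (V i t * Vs i)) * (V i t - Vs i) ^ 2 := by
        have := hr2 i; positivity
      have haz : r1 i * (It i t - Its i) ^ 2 = 0 := by linarith
      have hbz : (YL i - PL i / (V i t * Vs i)) * (V i t - Vs i) ^ 2 = 0 := by linarith
      constructor
      · have := (mul_eq_zero.mp haz).resolve_left (ne_of_gt (hr1 i))
        have := pow_eq_zero_iff (n := 2) (by norm_num) |>.mp this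
        linarith
      · have := (mul_eq_zero.mp hbz).resolve_left (ne_of_gt (hr2 i))
        have := pow_eq_zero_iff (n := 2) (by norm_num) |>.mp this
        linarith
    · intro e
      have he := h2 e (Finset.mem_univ e)
      have := (mul_eq_zero.mp he).resolve_left (ne_of_gt (hR e))
      have := pow_eq_zero_iff (n := 2) (by norm_num) |>.mp this
      linarith
end
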